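/- Fix integers k, m ≥ 2. Let D_{k,m} be the m-branching diamond graph of depth k: its vertex set is (V(P_k) × {1,…,m})/∼ where P_k is the path {0, 1/k, …, 1}, and (u,i) ∼ (v,j) iff (u,i)=(v,j), or u=v=0, or u=v=1; its edges are ([(e⁻,i)],[(e⁺,i)]) for e an edge of P_k and 1 ≤ i ≤ m. Equip E(D_{k,m}) with the uniform probability measure ν(e) = 1/(km) and edge lengths d(e) = 1/k, and let μ be the vertex measure μ(x) = ∑_{e⁺=x} ν(e)/2 + ∑_{e⁻=x} ν(e)/2. Then for every subset S ⊆ V(D_{k,m}), min{μ(S), μ(Sᶜ)}^{(δ−1)/δ} ≤ (m/2) · Per(S) where δ = 1 + log m / log k and Per(S) = ∑_{e ∈ ∂S} ν(e)/d(e). -/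

import Mathlib

/-- Vertices of the `m`-branching diamond graph of depth `k`: the source `Sum.inl false`,
the sink `Sum.inl true`, and interior vertices `(position, branch)` with position in
`{1, …, k−1}` (encoded by `Fin (k−1)`) and branch in `{1, …, m}` (encoded by `Fin m`). -/
abbrev DiamondVert (k m : ℕ) := Bool ⊕ (Fin (k - 1) × Fin m)

/-- Tail of the edge at position `e.1 ∈ {0, …, k−1}` on branch `e.2` of `D_{k,m}`. -/
def diamondSrc (k m : ℕ) (e : Fin k × Fin m) : DiamondVert k m :=
  if h : e.1.val = 0 then Sum.inl false
  else Sum.inr (⟨e.1.val - 1, by have := e.1.isLt; omega⟩, e.2)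

/-- Head of the edge at position `e.1 ∈ {0, …, k−1}` on branch `e.2` of `D_{k,m}`. -/
def diamondTgt (k m : ℕ) (e : Fin k × Fin m) : DiamondVert k m :=
  if h : e.1.val = k - 1 then Sum.inl true
  else Sum.inr (⟨e.1.val, by have := e.1.isLt; omega⟩, e.2)

/-- The degree-probability vertex measure of `D_{k,m}` induced by the uniform edge measure
`ν(e) = 1/(km)`: `μ(x) = ∑_{e⁺=x} ν(e)/2 + ∑_{e⁻=x} ν(e)/2`. -/
noncomputable def diamondμ (k m : ℕ) (x : DiamondVert k m) : ℝ :=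
  (∑ _e ∈ Finset.univ.filter (fun e => diamondTgt k m e = x), (1 / (k * m : ℝ)) / 2)
  + ∑ _e ∈ Finset.univ.filter (fun e => diamondSrc k m e = x), (1 / (k * m : ℝ)) / 2

namespace DiamondAux

/-- the vertex at position `p ∈ {0,…,k}` on branch `j`. -/
def dvert (k m : ℕ) (j : Fin m) (p : ℕ) : DiamondVert k m :=
  if hp : p = 0 then Sum.inl false
  else if h : p < k then Sum.inr (⟨p - 1, by omega⟩, j)
  else Sum.inl true

lemma src_eq {k m : ℕ} (e : Fin k × Fin m) :
    diamondSrc k m e = dvert k m e.2 e.1.val := by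
  rcases e with ⟨⟨p, hp⟩, j⟩
  by_cases h0 : p = 0 <;> simp [diamondSrc, dvert, h0, hp]

lemma tgt_eq {k m : ℕ} (e : Fin k × Fin m) :
    diamondTgt k m e = dvert k m e.2 (e.1.val + 1) := by
  rcases e with ⟨⟨p, hp⟩, j⟩
  by_cases h0 : p = k - 1
  · have hk : ¬ (p + 1 < k) := by omega
    have h1 : ¬ (p + 1 = 0) := by omega
    rw [diamondTgt, dif_pos h0]
    rw [dvert, dif_neg h1, dif_neg hk]
  · have hk : p + 1 < k := by omega
    simp [diamondTgt, dvert, h0, hk]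

lemma dvert_zero {k m : ℕ} (j : Fin m) : dvert k m j 0 = Sum.inl false := by
  simp [dvert]

lemma dvert_top {k m : ℕ} (hk : 2 ≤ k) (j : Fin m) : dvert k m j k = Sum.inl true := by
  have h1 : ¬ (k = 0) := by omega
  have h2 : ¬ (k < k) := by omega
  simp [dvert, h1, h2]

lemma dvert_interior {k m : ℕ} (q : Fin (k - 1)) (j : Fin m) :
    dvert k m j (q.val + 1) = Sum.inr (q, j) := by
  have h1 : ¬ (q.val + 1 = 0) := by omega
  have h2 : q.val + 1 < k := by have := q.isLt; omega
  simp [dvert, h1, h2]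

lemma crossing {k m : ℕ} (S : Finset (DiamondVert k m)) (j : Fin m) :
    ∀ b a, a ≤ b → dvert k m j a ∈ S → dvert k m j b ∉ S →
      ∃ p, a ≤ p ∧ p < b ∧ dvert k m j p ∈ S ∧ dvert k m j (p + 1) ∉ S := by
  intro b
  induction b with
  | zero =>
    intro a ha h1 h2
    interval_cases a
    exact absurd h1 h2
  | succ b ih =>
    intro a ha h1 h2
    have hab : a ≤ b := by
      rcases Nat.lt_or_ge a (b + 1) with h | h
      · omega
      · exfalso; have : a = b + 1 := by omega
        exact h2 (this ▸ h1)
    by_cases hb : dvert k m j b ∈ S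
    · exact ⟨b, hab, Nat.lt_succ_self b, hb, h2⟩
    · obtain ⟨p, h1', h2', h3', h4'⟩ := ih a hab h1 hb
      exact ⟨p, h1', by omega, h3', h4'⟩

lemma crossing' {k m : ℕ} (S : Finset (DiamondVert k m)) (j : Fin m) (b a : ℕ)
    (hab : a ≤ b) (h1 : dvert k m j a ∉ S) (h2 : dvert k m j b ∈ S) :
    ∃ p, a ≤ p ∧ p < b ∧ dvert k m j p ∉ S ∧ dvert k m j (p + 1) ∈ S := by
  have := crossing Sᶜ j b a hab (by simpa using h1) (by simpa using h2)
  simpa using this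

/-- The boundary predicate. -/
def Bdry {k m : ℕ} (S : Finset (DiamondVert k m)) (e : Fin k × Fin m) : Prop :=
  (diamondSrc k m e ∈ S ∧ diamondTgt k m e ∉ S) ∨
    (diamondSrc k m e ∉ S ∧ diamondTgt k m e ∈ S)

lemma bdry_of_cross {k m : ℕ} (S : Finset (DiamondVert k m)) (j : Fin m)
    (p : ℕ) (hp : p < k)
    (h : (dvert k m j p ∈ S ∧ dvert k m j (p + 1) ∉ S) ∨
         (dvert k m j p ∉ S ∧ dvert k m j (p + 1) ∈ S)) :
    Bdry S (⟨p, hp⟩, j) := by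
  unfold Bdry
  rw [src_eq, tgt_eq]
  exact h

lemma exists_two {k m : ℕ} (hk : 2 ≤ k) (hm : 2 ≤ m) (S : Finset (DiamondVert k m))
    (hS : S.Nonempty) (hSc : Sᶜ.Nonempty) :
    ∃ e1 e2 : Fin k × Fin m, e1 ≠ e2 ∧ Bdry S e1 ∧ Bdry S e2 := by
  by_cases hF : (Sum.inl false : DiamondVert k m) ∈ S <;>
    by_cases hT : (Sum.inl true : DiamondVert k m) ∈ S
  · -- source and sink in S; take an interior vertex outside S
    obtain ⟨x, hx⟩ := hSc
    rw [Finset.mem_compl] at hx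
    obtain (b | ⟨q, j⟩) := x
    · cases b
      · exact absurd hF hx
      · exact absurd hT hx
    · have hxv : dvert k m j (q.val + 1) ∉ S := by rw [dvert_interior]; exact hx
      obtain ⟨p1, -, hp1b, hp1S, hp1S'⟩ :=
        crossing S j (q.val + 1) 0 (by omega) (by rw [dvert_zero]; exact hF) hxv
      obtain ⟨p2, hp2a, hp2b, hp2S, hp2S'⟩ :=
        crossing' S j k (q.val + 1) (by have := q.isLt; omega) hxv
          (by rw [dvert_top hk]; exact hT)
      refine ⟨(⟨p1, by omega⟩, j), (⟨p2, by omega⟩, j), ?_, ?_, ?_⟩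
      · intro h
        have : p1 = p2 := congrArg (fun e => (e.1 : ℕ)) h
        omega
      · exact bdry_of_cross S j p1 (by omega) (Or.inl ⟨hp1S, hp1S'⟩)
      · exact bdry_of_cross S j p2 (by omega) (Or.inr ⟨hp2S, hp2S'⟩)
  · -- source in S, sink not in S : every branch crosses
    have key : ∀ j : Fin m, ∃ p, p < k ∧ dvert k m j p ∈ S ∧ dvert k m j (p + 1) ∉ S := by
      intro j
      obtain ⟨p, -, hpb, h3, h4⟩ :=
        crossing S j k 0 (by omega) (by rw [dvert_zero]; exact hF)
          (by rw [dvert_top hk]; exact hT)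
      exact ⟨p, hpb, h3, h4⟩
    obtain ⟨p1, hp1, h1, h1'⟩ := key ⟨0, by omega⟩
    obtain ⟨p2, hp2, h2, h2'⟩ := key ⟨1, by omega⟩
    refine ⟨(⟨p1, hp1⟩, ⟨0, by omega⟩), (⟨p2, hp2⟩, ⟨1, by omega⟩), ?_, ?_, ?_⟩
    · intro h
      have : (0 : ℕ) = 1 := congrArg (fun e => (e.2 : ℕ)) h
      omega
    · exact bdry_of_cross S _ p1 hp1 (Or.inl ⟨h1, h1'⟩)
    · exact bdry_of_cross S _ p2 hp2 (Or.inl ⟨h2, h2'⟩)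
  · -- source not in S, sink in S
    have key : ∀ j : Fin m, ∃ p, p < k ∧ dvert k m j p ∉ S ∧ dvert k m j (p + 1) ∈ S := by
      intro j
      obtain ⟨p, -, hpb, h3, h4⟩ :=
        crossing' S j k 0 (by omega) (by rw [dvert_zero]; exact hF)
          (by rw [dvert_top hk]; exact hT)
      exact ⟨p, hpb, h3, h4⟩
    obtain ⟨p1, hp1, h1, h1'⟩ := key ⟨0, by omega⟩
    obtain ⟨p2, hp2, h2, h2'⟩ := key ⟨1, by omega⟩
    refine ⟨(⟨p1, hp1⟩, ⟨0, by omega⟩), (⟨p2, hp2⟩, ⟨1, by omega⟩), ?_, ?_, ?_⟩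
    · intro h
      have : (0 : ℕ) = 1 := congrArg (fun e => (e.2 : ℕ)) h
      omega
    · exact bdry_of_cross S _ p1 hp1 (Or.inr ⟨h1, h1'⟩)
    · exact bdry_of_cross S _ p2 hp2 (Or.inr ⟨h2, h2'⟩)
  · -- source and sink both outside S; take an interior vertex in S
    obtain ⟨x, hx⟩ := hS
    obtain (b | ⟨q, j⟩) := x
    · cases b
      · exact absurd hx hF
      · exact absurd hx hT
    · have hxv : dvert k m j (q.val + 1) ∈ S := by rw [dvert_interior]; exact hx
      obtain ⟨p1, -, hp1b, hp1S, hp1S'⟩ :=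
        crossing' S j (q.val + 1) 0 (by omega) (by rw [dvert_zero]; exact hF) hxv
      obtain ⟨p2, hp2a, hp2b, hp2S, hp2S'⟩ :=
        crossing S j k (q.val + 1) (by have := q.isLt; omega) hxv
          (by rw [dvert_top hk]; exact hT)
      refine ⟨(⟨p1, by omega⟩, j), (⟨p2, by omega⟩, j), ?_, ?_, ?_⟩
      · intro h
        have : p1 = p2 := congrArg (fun e => (e.1 : ℕ)) h
        omega
      · exact bdry_of_cross S j p1 (by omega) (Or.inr ⟨hp1S, hp1S'⟩)
      · exact bdry_of_cross S j p2 (by omega) (Or.inl ⟨hp2S, hp2S'⟩)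

lemma μ_nonneg {k m : ℕ} (x : DiamondVert k m) : 0 ≤ diamondμ k m x := by
  unfold diamondμ
  have h : (0:ℝ) ≤ (1 / (k * m : ℝ)) / 2 := by positivity
  positivity

lemma total {k m : ℕ} (hk : 2 ≤ k) (hm : 2 ≤ m) :
    ∑ x : DiamondVert k m, diamondμ k m x = 1 := by
  unfold diamondμ
  rw [Finset.sum_add_distrib, Finset.sum_fiberwise, Finset.sum_fiberwise,
      Finset.sum_const]
  simp only [Finset.card_univ, Fintype.card_prod, Fintype.card_fin, nsmul_eq_mul]
  have hk0 : (k : ℝ) ≠ 0 := Nat.cast_ne_zero.mpr (by omega)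
  have hm0 : (m : ℝ) ≠ 0 := Nat.cast_ne_zero.mpr (by omega)
  field_simp
  push_cast
  ring

end DiamondAux

/-- Isoperimetric inequality for the generalized diamond graph `D_{k,m}`:
`min{μ(S), μ(Sᶜ)}^{(δ−1)/δ} ≤ (m/2)·Per(S)` with `δ = 1 + log m / log k`, uniform edge
measure `ν(e) = 1/(km)` and edge lengths `d(e) = 1/k`. -/
theorem diamond_isoperimetric (k m : ℕ) (hk : 2 ≤ k) (hm : 2 ≤ m)
    (S : Finset (DiamondVert k m)) :
    (min (∑ x ∈ S, diamondμ k m x) (∑ x ∈ Sᶜ, diamondμ k m x)) ^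
        (((1 + Real.log m / Real.log k) - 1) / (1 + Real.log m / Real.log k)) ≤
      (m / 2 : ℝ) * ∑ e : Fin k × Fin m,
        (if (diamondSrc k m e ∈ S ∧ diamondTgt k m e ∉ S) ∨
            (diamondSrc k m e ∉ S ∧ diamondTgt k m e ∈ S)
          then (1 / (k * m : ℝ)) / (1 / (k : ℝ)) else 0) := by
  have hk0 : (k : ℝ) ≠ 0 := Nat.cast_ne_zero.mpr (by omega)
  have hm0 : (m : ℝ) ≠ 0 := Nat.cast_ne_zero.mpr (by omega)
  have hk1 : (1 : ℝ) < k := by exact_mod_cast hk.trans_lt' one_lt_two |>.trans_le le_rfl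
  have hm1 : (1 : ℝ) < m := by exact_mod_cast Nat.lt_of_lt_of_le one_lt_two hm
  have hL : 0 < Real.log m / Real.log k :=
    div_pos (Real.log_pos hm1) (Real.log_pos hk1)
  set L := Real.log m / Real.log k with hLdef
  have hε : 0 < ((1 + L) - 1) / (1 + L) := by
    have h1 : (1 + L) - 1 = L := by ring
    rw [h1]
    positivity
  -- nonnegativity of every summand on the right
  have hterm : ∀ e : Fin k × Fin m,
      (0:ℝ) ≤ (if (diamondSrc k m e ∈ S ∧ diamondTgt k m e ∉ S) ∨
            (diamondSrc k m e ∉ S ∧ diamondTgt k m e ∈ S)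
          then (1 / (k * m : ℝ)) / (1 / (k : ℝ)) else 0) := by
    intro e
    split
    · positivity
    · exact le_rfl
  have hsumnn : (0:ℝ) ≤ ∑ e : Fin k × Fin m,
      (if (diamondSrc k m e ∈ S ∧ diamondTgt k m e ∉ S) ∨
          (diamondSrc k m e ∉ S ∧ diamondTgt k m e ∈ S)
        then (1 / (k * m : ℝ)) / (1 / (k : ℝ)) else 0) :=
    Finset.sum_nonneg fun e _ => hterm e
  have hRHS0 : (0:ℝ) ≤ (m / 2 : ℝ) * ∑ e : Fin k × Fin m,
      (if (diamondSrc k m e ∈ S ∧ diamondTgt k m e ∉ S) ∨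
          (diamondSrc k m e ∉ S ∧ diamondTgt k m e ∈ S)
        then (1 / (k * m : ℝ)) / (1 / (k : ℝ)) else 0) :=
    mul_nonneg (by positivity) hsumnn
  have hSnn : (0:ℝ) ≤ ∑ x ∈ S, diamondμ k m x :=
    Finset.sum_nonneg fun x _ => DiamondAux.μ_nonneg x
  have hScnn : (0:ℝ) ≤ ∑ x ∈ Sᶜ, diamondμ k m x :=
    Finset.sum_nonneg fun x _ => DiamondAux.μ_nonneg x
  rcases Finset.eq_empty_or_nonempty S with hSe | hSne
  · subst hSe
    rw [Finset.sum_empty, min_eq_left hScnn, Real.zero_rpow hε.ne']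
    exact hRHS0
  rcases Finset.eq_empty_or_nonempty Sᶜ with hSce | hScne
  · rw [hSce, Finset.sum_empty, min_eq_right hSnn, Real.zero_rpow hε.ne']
    exact hRHS0
  -- both nonempty: at least two boundary edges
  obtain ⟨e1, e2, hne, hb1, hb2⟩ := DiamondAux.exists_two hk hm S hSne hScne
  unfold DiamondAux.Bdry at hb1 hb2
  have hpairsum : (2:ℝ) * ((1 / (k * m : ℝ)) / (1 / (k : ℝ))) ≤
      ∑ e : Fin k × Fin m,
        (if (diamondSrc k m e ∈ S ∧ diamondTgt k m e ∉ S) ∨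
            (diamondSrc k m e ∉ S ∧ diamondTgt k m e ∈ S)
          then (1 / (k * m : ℝ)) / (1 / (k : ℝ)) else 0) := by
    have hsub := Finset.sum_le_sum_of_subset_of_nonneg
      (Finset.subset_univ ({e1, e2} : Finset (Fin k × Fin m)))
      (fun e _ _ => hterm e)
    refine le_trans (le_of_eq ?_) hsub
    rw [Finset.sum_pair hne, if_pos hb1, if_pos hb2]
    ring
  have hone : (1:ℝ) ≤ (m / 2 : ℝ) * ∑ e : Fin k × Fin m,
      (if (diamondSrc k m e ∈ S ∧ diamondTgt k m e ∉ S) ∨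
          (diamondSrc k m e ∉ S ∧ diamondTgt k m e ∈ S)
        then (1 / (k * m : ℝ)) / (1 / (k : ℝ)) else 0) := by
    have := mul_le_mul_of_nonneg_left hpairsum (by positivity : (0:ℝ) ≤ (m/2:ℝ))
    refine le_trans (le_of_eq ?_) this
    field_simp
  refine le_trans ?_ hone
  have hmin1 : min (∑ x ∈ S, diamondμ k m x) (∑ x ∈ Sᶜ, diamondμ k m x) ≤ 1 := by
    refine le_trans (min_le_left _ _) ?_
    calc ∑ x ∈ S, diamondμ k m x
        ≤ ∑ x : DiamondVert k m, diamondμ k m x :=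
          Finset.sum_le_sum_of_subset_of_nonneg (Finset.subset_univ S)
            (fun x _ _ => DiamondAux.μ_nonneg x)
      _ = 1 := DiamondAux.total hk hm
  exact Real.rpow_le_one (le_min hSnn hScnn) hmin1 hε.le
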